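/- arXiv:2007.00681 — 2 statements merged into one kernel-verified Lean document; each statement's English description precedes it below -/
import Mathlib

section
/- Let E ≻ 0, Y ∈ ℝ^{m×n}, K = YE⁻¹, O ∈ ℝ^{1×m}, o > 0. If the block matrix [[o², OY],[YᵀOᵀ, E]] is positive semidefinite, then for every x with xᵀE⁻¹x ≤ 1 the input u = Kx satisfies |O u| ≤ o. Hence the ellipsoid {x : xᵀE⁻¹x ≤ 1} is contained in {x : OKx ≤ o}. -/
open Matrix

/-- Input-constraint LMI: if `[[o², OY],[YᵀOᵀ, E]] ⪰ 0` with `E ≻ 0`, `K = YE⁻¹` and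
`o > 0`, then every `x` with `xᵀE⁻¹x ≤ 1` gives an input `u = Kx` with `|Ou| ≤ o`;
in particular `OKx ≤ o`. -/
theorem stmt_11 (n m : ℕ) (E : Matrix (Fin n) (Fin n) ℝ)
    (Y : Matrix (Fin m) (Fin n) ℝ) (K : Matrix (Fin m) (Fin n) ℝ)
    (O : Matrix (Fin 1) (Fin m) ℝ) (o : ℝ)
    (hE : E.PosDef) (hEsym : E.IsSymm) (hK : K = Y * E⁻¹) (ho : 0 < o)
    (hblk : (Matrix.fromBlocks !![o ^ 2] (O * Y) (Yᵀ * Oᵀ) E).PosSemidef) :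
    ∀ x : Fin n → ℝ, x ⬝ᵥ E⁻¹.mulVec x ≤ 1 →
      |(O.mulVec (K.mulVec x)) 0| ≤ o ∧ (O.mulVec (K.mulVec x)) 0 ≤ o := by
  intro x hx
  set u := (O.mulVec (K.mulVec x)) 0 with hu
  set q := x ⬝ᵥ E⁻¹.mulVec x with hq
  have hdet : E.det ≠ 0 := hE.det_pos.ne'
  have hEinv : E * E⁻¹ = 1 := mul_nonsing_inv E (isUnit_iff_ne_zero.mpr hdet)
  have key : ∀ c : ℝ, 0 ≤ o^2 + 2*c*u + c^2 * q := by
    intro c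
    have hOY : (O * Y) *ᵥ (c • (E⁻¹ *ᵥ x)) = c • (O *ᵥ (K *ᵥ x)) := by
      rw [mulVec_smul, mulVec_mulVec, Matrix.mul_assoc, ← hK, ← mulVec_mulVec]
    have hB1 : (c • (E⁻¹ *ᵥ x)) ⬝ᵥ ((Yᵀ * Oᵀ) *ᵥ (fun _ : Fin 1 => (1:ℝ)))
        = ((O * Y) *ᵥ (c • (E⁻¹ *ᵥ x))) ⬝ᵥ (fun _ : Fin 1 => (1:ℝ)) := by
      rw [dotProduct_mulVec, ← transpose_mul, vecMul_transpose]
    have hB2 : (c • (E⁻¹ *ᵥ x)) ⬝ᵥ (E *ᵥ (c • (E⁻¹ *ᵥ x))) = c^2 * q := by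
      rw [mulVec_smul, mulVec_mulVec, hEinv, one_mulVec, smul_dotProduct,
        dotProduct_smul, dotProduct_comm, hq]
      simp only [smul_eq_mul]
      ring
    have h := hblk.dotProduct_mulVec_nonneg (Sum.elim (fun _ => (1:ℝ)) (c • (E⁻¹.mulVec x)))
    rw [fromBlocks_mulVec] at h
    simp only [star_trivial, RCLike.re_to_real, sumElim_dotProduct_sumElim,
      Sum.elim_comp_inl, Sum.elim_comp_inr, dotProduct_add, hOY, hB1, hB2] at h
    simp only [hOY, dotProduct, Fin.sum_univ_one, mulVec, Pi.smul_apply, smul_eq_mul,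
      cons_val', cons_val_zero, cons_val_fin_one, of_apply, cons_val_one] at h
    have hu' : u = ∑ i : Fin m, O 0 i * ∑ j : Fin n, K i j * x j := by
      simp [hu, mulVec, dotProduct]
    rw [hu']
    linarith [h]
  have h1 := key (-o)
  have h2 := key o
  have hq1 : o^2 * q ≤ o^2 := by nlinarith [sq_nonneg o]
  constructor
  · rw [abs_le]; constructor <;> nlinarith
  · nlinarith
end

section
/- Let E ≻ 0, Y = KE, and suppose [[E + S, E Aᵀ + Yᵀ Bᵀ],[A E + B Y, E]] ⪰ 0 with S ⪯ 0 symmetric. Then (A + BK)ᵀ E⁻¹ (A + BK) − E⁻¹ ⪯ E⁻¹ S E⁻¹ ⪯ 0, and in particular the ellipsoid {x : xᵀE⁻¹x ≤ 1} is invariant under x ↦ (A+BK)x. -/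
open Matrix

/-- Linearized invariance LMI: if `E ≻ 0`, `Y = KE`, `S ⪯ 0` symmetric, and
`[[E + S, EAᵀ + YᵀBᵀ],[AE + BY, E]] ⪰ 0`, then
`(A+BK)ᵀE⁻¹(A+BK) − E⁻¹ ⪯ E⁻¹SE⁻¹ ⪯ 0`, and in particular the ellipsoid
`{x : xᵀE⁻¹x ≤ 1}` is invariant under `x ↦ (A+BK)x`. -/
theorem stmt_15 (n m : ℕ)
    (E S A : Matrix (Fin n) (Fin n) ℝ)
    (B : Matrix (Fin n) (Fin m) ℝ)
    (K Y : Matrix (Fin m) (Fin n) ℝ)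
    (hE : E.PosDef) (hEsym : E.IsSymm) (hY : Y = K * E)
    (hSsym : S.IsSymm) (hSneg : (-S).PosSemidef)
    (hblk : (Matrix.fromBlocks (E + S) (E * Aᵀ + Yᵀ * Bᵀ) (A * E + B * Y) E).PosSemidef) :
    (E⁻¹ * S * E⁻¹ - ((A + B * K)ᵀ * E⁻¹ * (A + B * K) - E⁻¹)).PosSemidef ∧
    (-(E⁻¹ * S * E⁻¹)).PosSemidef ∧
    ∀ x : Fin n → ℝ, x ⬝ᵥ E⁻¹.mulVec x ≤ 1 →
      ((A + B * K).mulVec x) ⬝ᵥ E⁻¹.mulVec ((A + B * K).mulVec x) ≤ 1 := by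
  set M := A + B * K with hM
  set P := E⁻¹ with hP
  haveI : Invertible E := hE.isUnit.invertible
  have hEP : E * P = 1 := Matrix.mul_inv_of_invertible E
  have hPE : P * E = 1 := Matrix.inv_mul_of_invertible E
  have hEt : Eᵀ = E := hEsym
  have hPt : Pᵀ = P := by
    rw [hP, Matrix.transpose_nonsing_inv, hEt]
  -- rewrite the blocks
  have hME : A * E + B * Y = M * E := by
    rw [hY, hM, Matrix.add_mul, Matrix.mul_assoc]
  have hEMt : E * Aᵀ + Yᵀ * Bᵀ = (M * E)ᵀ := by
    rw [hM, hY]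
    simp [Matrix.transpose_mul, Matrix.transpose_add, hEt, Matrix.mul_add, Matrix.mul_assoc]
  have hH : ∀ (X : Matrix (Fin n) (Fin n) ℝ), Xᴴ = Xᵀ := by
    intro X; ext i j; simp [conjTranspose_apply]
  have hblk' : (Matrix.fromBlocks (E + S) ((M * E)ᵀ) (((M * E)ᵀ)ᴴ) E).PosSemidef := by
    rwa [hH, transpose_transpose, ← hEMt, ← hME]
  have hschur : ((E + S) - (M * E)ᵀ * E⁻¹ * ((M * E)ᵀ)ᴴ).PosSemidef :=
    (Matrix.PosDef.fromBlocks₂₂ _ _ hE).mp hblk'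
  have hschur' : ((E + S) - Eᵀ * Mᵀ * P * (M * E)).PosSemidef := by
    rwa [hH, transpose_transpose, transpose_mul, ← hP] at hschur
  -- conjugate with P
  have hconj := hschur'.conjTranspose_mul_mul_same P
  have hiden : Pᴴ * ((E + S) - Eᵀ * Mᵀ * P * (M * E)) * P
      = P * S * P - (Mᵀ * P * M - P) := by
    have h1 : P * E * P = P := by rw [hPE, Matrix.one_mul]
    have h2 : P * (E * Mᵀ * P * (M * E)) * P
        = Mᵀ * P * M := by
      rw [show E * Mᵀ * P * (M * E) = E * (Mᵀ * P * M) * E by noncomm_ring,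
        ← mul_assoc, ← mul_assoc, hPE, Matrix.one_mul, mul_assoc, hEP, Matrix.mul_one]
    rw [hH, hPt, hEt, Matrix.mul_sub, Matrix.sub_mul, Matrix.mul_add, Matrix.add_mul, h1, h2]
    abel
  have res1 : (P * S * P - (Mᵀ * P * M - P)).PosSemidef := by
    rwa [hiden] at hconj
  have res2 : (-(P * S * P)).PosSemidef := by
    have := hSneg.conjTranspose_mul_mul_same P
    rwa [hH, hPt, Matrix.mul_neg, Matrix.neg_mul] at this
  refine ⟨res1, res2, ?_⟩
  intro x hx
  have h1 := res1.dotProduct_mulVec_nonneg x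
  have h2 := res2.dotProduct_mulVec_nonneg x
  simp only [star_trivial] at h1 h2
  have key : (M *ᵥ x) ⬝ᵥ P *ᵥ (M *ᵥ x) = x ⬝ᵥ (Mᵀ * P * M) *ᵥ x := by
    rw [← Matrix.mulVec_mulVec, ← Matrix.mulVec_mulVec, Matrix.dotProduct_mulVec x,
      Matrix.vecMul_transpose]
  have expand : x ⬝ᵥ (P * S * P - (Mᵀ * P * M - P)) *ᵥ x
      = x ⬝ᵥ (P * S * P) *ᵥ x - (x ⬝ᵥ (Mᵀ * P * M) *ᵥ x - x ⬝ᵥ P *ᵥ x) := by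
    simp [Matrix.sub_mulVec, dotProduct_sub]
  have hss : x ⬝ᵥ (P * S * P) *ᵥ x ≤ 0 := by
    have : x ⬝ᵥ (-(P * S * P)) *ᵥ x = -(x ⬝ᵥ (P * S * P) *ᵥ x) := by
      simp [Matrix.neg_mulVec]
    linarith [h2, this ▸ h2]
  rw [expand] at h1
  rw [key]
  linarith
end
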